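/- For every A > 0, T_sub(A) := sup{𝒯_H : H ∈ 𝒜_sub(A)} is finite. Moreover, lim sup_{A→0⁺} T_sub(A) · A^{2(p−1)/(2−(n−1)(p−1))} < ∞; equivalently, there exist A₀ > 0 and C > 0 such that for all A ∈ (0, A₀), every H ∈ 𝒜_sub(A) defined on [0, 𝒯_H) satisfies 𝒯_H ≤ C A^{−2(p−1)/(2−(n−1)(p−1))}. -/

import Mathlib

open Set

/-- One-sided first derivative on `[0, ∞)`. -/
noncomputable def Hd (H : ℝ → ℝ) : ℝ → ℝ := derivWithin H (Set.Ici 0)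

/-- One-sided second derivative on `[0, ∞)`. -/
noncomputable def Hdd (H : ℝ → ℝ) : ℝ → ℝ := derivWithin (Hd H) (Set.Ici 0)

/-- `H ∈ 𝒜_sub(A)` with (possibly infinite) existence time `S = 𝒯_H`:
`H` is `C²` on `[0, S)`, `H(0) = H'(0) = 0`, `H''(t) ≥ A` on `[0, S)`, and
`H''(t) ≥ (t+1)^{-(n+3)p/2 + (n+1)/2} H(t)^p` on `[T₀, S)`. -/
def MemAsub (n : ℕ) (p T₀ A : ℝ) (H : ℝ → ℝ) (S : EReal) : Prop :=
  0 < S ∧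
  ContDiffOn ℝ 2 H {t : ℝ | 0 ≤ t ∧ (t : EReal) < S} ∧
  H 0 = 0 ∧ Hd H 0 = 0 ∧
  (∀ t : ℝ, 0 ≤ t → (t : EReal) < S → A ≤ Hdd H t) ∧
  (∀ t : ℝ, T₀ ≤ t → (t : EReal) < S →
    (t + 1) ^ (-(((n : ℝ) + 3) * p / 2) + ((n : ℝ) + 1) / 2) * H t ^ p ≤ Hdd H t)

/-- The constant `b₀`. -/
noncomputable def bb0 (n : ℕ) (p : ℝ) : ℝ :=
  1 / (p - 1) - ((n : ℝ) - 1) / 2 + max 0 (((n : ℝ) + 3) / 2 - 1 / (p - 1)) * p⁻¹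

/-- The constant `b₁`. -/
noncomputable def bb1 (n : ℕ) (p : ℝ) : ℝ :=
  1 / (p - 1) - ((n : ℝ) - 1) / 2 + max 0 (((n : ℝ) + 1) / 2 - 1 / (p - 1)) * p⁻¹

noncomputable def alphaC (n : ℕ) (p : ℝ) : ℝ := ((n : ℝ) + 3) * p / 2 - ((n : ℝ) + 1) / 2
noncomputable def gammaC (p : ℝ) : ℝ := p / (p + 1) + 1 / 2

noncomputable def CC (n : ℕ) (p : ℝ) : ℝ :=
  ((((p + 1) * (1 / 2 : ℝ) ^ p) ^ (-(gammaC p - 1))) /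
    (2 * (gammaC p - 1) * (p + 1) * (2 / (p + 1)) ^ ((1 : ℝ) / 2) *
      (5 : ℝ) ^ (-(alphaC n p / 2)))) ^ (p - alphaC n p / 2)⁻¹

lemma mono_aux {f g f' g' : ℝ → ℝ} {a b : ℝ} (hab : a ≤ b)
    (hf : ContinuousOn f (Icc a b)) (hg : ContinuousOn g (Icc a b))
    (hfd : ∀ x ∈ Ioo a b, HasDerivAt f (f' x) x)
    (hgd : ∀ x ∈ Ioo a b, HasDerivAt g (g' x) x)
    (hle : ∀ x ∈ Ioo a b, g' x ≤ f' x) : g b - g a ≤ f b - f a := by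
  have hmono : MonotoneOn (fun x => f x - g x) (Icc a b) := by
    apply monotoneOn_of_deriv_nonneg (convex_Icc a b) (hf.sub hg)
    · intro x hx
      rw [interior_Icc] at hx
      exact ((hfd x hx).sub (hgd x hx)).differentiableAt.differentiableWithinAt
    · intro x hx
      rw [interior_Icc] at hx
      rw [((hfd x hx).sub (hgd x hx)).deriv]
      linarith [hle x hx]
  have := hmono (left_mem_Icc.2 hab) (right_mem_Icc.2 hab) hab
  simp only at this
  linarith

lemma regularity {H : ℝ → ℝ} {S : EReal}
    (hC2 : ContDiffOn ℝ 2 H {t : ℝ | 0 ≤ t ∧ (t : EReal) < S}) {b' : ℝ} (hb0 : 0 < b')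
    (hb : ((b' : ℝ) : EReal) < S) :
    ContinuousOn H (Ico 0 b') ∧ ContinuousOn (Hd H) (Ico 0 b') ∧
    (∀ u ∈ Ioo 0 b', HasDerivAt H (Hd H u) u) ∧
    (∀ u ∈ Ioo 0 b', HasDerivAt (Hd H) (Hdd H u) u) := by
  have hsub : Icc 0 b' ⊆ {t : ℝ | 0 ≤ t ∧ (t : EReal) < S} := by
    intro x hx
    exact ⟨hx.1, lt_of_le_of_lt (EReal.coe_le_coe_iff.2 hx.2) hb⟩
  have hC2' : ContDiffOn ℝ 2 H (Icc 0 b') := hC2.mono hsub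
  have hC2o : ContDiffOn ℝ 2 H (Ioo 0 b') := hC2'.mono Ioo_subset_Icc_self
  have hF2 : ∀ u ∈ Ioo 0 b', HasDerivAt H (Hd H u) u := by
    intro u hu
    have hdiff : DifferentiableAt ℝ H u :=
      (hC2o.differentiableOn (by norm_num)).differentiableAt ((isOpen_Ioo).mem_nhds hu)
    have : Hd H u = deriv H u := derivWithin_of_mem_nhds (Ici_mem_nhds hu.1)
    rw [this]
    exact hdiff.hasDerivAt
  have hHdeq : ∀ x ∈ Ioo 0 b', Hd H x = deriv H x := fun x hx =>
    derivWithin_of_mem_nhds (Ici_mem_nhds hx.1)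
  have hF4 : ∀ u ∈ Ioo 0 b', HasDerivAt (Hd H) (Hdd H u) u := by
    intro u hu
    have hev : Hd H =ᶠ[nhds u] deriv H :=
      Filter.eventuallyEq_of_mem ((isOpen_Ioo).mem_nhds hu) hHdeq
    have hd1 : ContDiffOn ℝ 1 (deriv H) (Ioo 0 b') :=
      hC2o.deriv_of_isOpen isOpen_Ioo (by norm_num)
    have hdiff : DifferentiableAt ℝ (deriv H) u :=
      (hd1.differentiableOn (by norm_num)).differentiableAt ((isOpen_Ioo).mem_nhds hu)
    have h2 : HasDerivAt (Hd H) (deriv (deriv H) u) u :=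
      hdiff.hasDerivAt.congr_of_eventuallyEq hev
    have h3 : Hdd H u = deriv (deriv H) u := by
      have h4 : Hdd H u = deriv (Hd H) u := derivWithin_of_mem_nhds (Ici_mem_nhds hu.1)
      rw [h4, hev.deriv_eq]
    rw [h3]
    exact h2
  have heq : EqOn (derivWithin H (Icc 0 b')) (Hd H) (Ico 0 b') := by
    intro x hx
    have hset : Icc (0 : ℝ) b' =ᶠ[nhds x] Ici (0 : ℝ) := by
      rw [Filter.eventuallyEq_set]
      filter_upwards [Iio_mem_nhds hx.2] with y hy
      simp only [mem_Icc, mem_Ici, and_iff_left_iff_imp]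
      exact fun _ => le_of_lt hy
    exact derivWithin_congr_set hset
  have hcont : ContinuousOn (Hd H) (Ico 0 b') :=
    ((hC2'.continuousOn_derivWithin (uniqueDiffOn_Icc hb0) (by norm_num)).mono
      Ico_subset_Icc_self).congr heq.symm
  exact ⟨hC2'.continuousOn.mono Ico_subset_Icc_self, hcont, hF2, hF4⟩

set_option maxHeartbeats 10000000 in
lemma key (n : ℕ) (p T₀ A : ℝ) (hp : 1 < p)
    (hpc : p * ((n : ℝ) - 1) < (n : ℝ) + 1) (hA : 0 < A)
    (H : ℝ → ℝ) (S : EReal) (hm : MemAsub n p T₀ A H S)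
    (T : ℝ) (hT1 : 1 ≤ T) (hTT0 : T₀ ≤ T) (hTS : ((4 * T : ℝ) : EReal) < S) :
    T ≤ CC n p * A ^ (-(2 * (p - 1) / (2 - ((n : ℝ) - 1) * (p - 1)))) := by
  obtain ⟨hS, hC2, hH0, hHd0, hA2, hODE⟩ := hm
  have hp0 : (0 : ℝ) < p := by linarith
  have hp1 : (0 : ℝ) < p + 1 := by linarith
  have hT0 : (0 : ℝ) < T := lt_of_lt_of_le one_pos hT1
  -- choose b' strictly between 4T and S
  obtain ⟨c, hc1, hc2⟩ := exists_between hTS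
  have hcT : c ≠ ⊤ := ne_top_of_lt hc2
  have hcB : c ≠ ⊥ := by
    intro h'; rw [h'] at hc1; exact (EReal.bot_lt_coe _).not_gt hc1
  have hcoe : ((c.toReal : ℝ) : EReal) = c := EReal.coe_toReal hcT hcB
  set b' := c.toReal with hb'def
  have hb'4 : 4 * T < b' := by rw [← EReal.coe_lt_coe_iff, hcoe]; exact hc1
  have hb'S : ((b' : ℝ) : EReal) < S := by rw [hcoe]; exact hc2
  have hb'0 : 0 < b' := by nlinarith
  obtain ⟨hHcont, hHdcont, hF2, hF4⟩ := regularity hC2 hb'0 hb'S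
  have hmemS : ∀ x : ℝ, x ≤ 4 * T → (x : EReal) < S := fun x hx =>
    lt_of_le_of_lt (EReal.coe_le_coe_iff.2 hx) hTS
  -- step P1 : A * u ≤ Hd H u
  have P1 : ∀ u ∈ Icc (0 : ℝ) (4 * T), A * u ≤ Hd H u := by
    intro u hu
    have hsubc : Icc (0 : ℝ) u ⊆ Ico 0 b' := fun y hy =>
      ⟨hy.1, lt_of_le_of_lt (le_trans hy.2 hu.2) hb'4⟩
    have h := mono_aux (f := Hd H) (g := fun x => A * x) (f' := Hdd H) (g' := fun _ => A)
      hu.1 (hHdcont.mono hsubc) ((continuous_const.mul continuous_id).continuousOn)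
      (fun x hx => hF4 x ⟨hx.1, by nlinarith [hx.2, hu.2]⟩)
      (fun x _ => by simpa using (hasDerivAt_id x).const_mul A)
      (fun x hx => hA2 x hx.1.le (hmemS x (by nlinarith [hx.2, hu.2])))
    have h' : A * u - A * 0 ≤ Hd H u - Hd H 0 := h
    rw [hHd0] at h'
    linarith
  -- step P2 : A/2 * (u*u) ≤ H u
  have P2 : ∀ u ∈ Icc (0 : ℝ) (4 * T), A / 2 * (u * u) ≤ H u := by
    intro u hu
    have hsubc : Icc (0 : ℝ) u ⊆ Ico 0 b' := fun y hy =>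
      ⟨hy.1, lt_of_le_of_lt (le_trans hy.2 hu.2) hb'4⟩
    have h := mono_aux (f := H) (g := fun x => A / 2 * (x * x)) (f' := Hd H)
      (g' := fun x => A / 2 * (1 * x + x * 1)) hu.1
      (hHcont.mono hsubc)
      ((continuous_const.mul (continuous_id.mul continuous_id)).continuousOn)
      (fun x hx => hF2 x ⟨hx.1, by nlinarith [hx.2, hu.2]⟩)
      (fun x _ => by simpa using ((hasDerivAt_id x).mul (hasDerivAt_id x)).const_mul (A / 2))
      (fun x hx => by
        have h1 := P1 x ⟨hx.1.le, le_trans hx.2.le hu.2⟩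
        show A / 2 * (1 * x + x * 1) ≤ Hd H x
        nlinarith [h1])
    have h' : A / 2 * (u * u) - A / 2 * (0 * 0) ≤ H u - H 0 := h
    rw [hH0] at h'
    nlinarith [h']
  have hHnn : ∀ u ∈ Icc (0 : ℝ) (4 * T), 0 ≤ H u := fun u hu =>
    le_trans (by nlinarith [hu.1]) (P2 u hu)
  have hHdnn : ∀ u ∈ Icc (0 : ℝ) (4 * T), 0 ≤ Hd H u := fun u hu =>
    le_trans (by nlinarith [hu.1]) (P1 u hu)
  set LB := A / 2 * (T * T) with hLBdef
  have hLBpos : 0 < LB := by positivity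
  have hHge : ∀ u ∈ Icc T (4 * T), LB ≤ H u := by
    intro u hu
    have h2 := P2 u ⟨le_trans hT0.le hu.1, hu.2⟩
    rw [hLBdef]
    nlinarith [hu.1, hT0, hA, mul_self_le_mul_self hT0.le hu.1]
  have hHdge : ∀ u ∈ Icc T (4 * T), A * T ≤ Hd H u := by
    intro u hu
    have h1 := P1 u ⟨le_trans hT0.le hu.1, hu.2⟩
    nlinarith [hu.1]
  set α := alphaC n p with hαdef
  have hn0 : (0 : ℝ) ≤ (n : ℝ) := Nat.cast_nonneg n
  have hα1 : 1 < α := by rw [hαdef]; unfold alphaC; nlinarith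
  have hαpos : 0 < α := by linarith
  have hODE' : ∀ u : ℝ, T ≤ u → u ≤ 4 * T → (u + 1) ^ (-α) * H u ^ p ≤ Hdd H u := by
    intro u h1 h2
    have h := hODE u (le_trans hTT0 h1) (hmemS u h2)
    have he : -(((n : ℝ) + 3) * p / 2) + ((n : ℝ) + 1) / 2 = -α := by
      rw [hαdef]; unfold alphaC; ring
    rwa [he] at h
  -- step P3 : energy inequality
  have P3 : ∀ v ∈ Icc (2 * T) (4 * T),
      2 * (v + 1) ^ (-α) / (p + 1) * (H v ^ (p + 1) - H T ^ (p + 1)) ≤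
        (Hd H v) ^ 2 - (Hd H T) ^ 2 := by
    intro v hv
    have hTv : T ≤ v := by linarith [hv.1]
    have hsubIco : Icc T v ⊆ Ico 0 b' := fun y hy =>
      ⟨le_trans hT0.le hy.1, by nlinarith [hy.2, hv.2]⟩
    have hsubIoo : Ioo T v ⊆ Ioo 0 b' := fun y hy =>
      ⟨lt_of_lt_of_le hT0 hy.1.le, by nlinarith [hy.2, hv.2]⟩
    have hwpos : (0 : ℝ) < (v + 1) ^ (-α) :=
      Real.rpow_pos_of_pos (by nlinarith [hv.1]) _
    have hcf : ContinuousOn (fun u => (Hd H u) ^ 2) (Icc T v) := (hHdcont.mono hsubIco).pow 2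
    have hcg : ContinuousOn (fun u => 2 * (v + 1) ^ (-α) / (p + 1) * H u ^ (p + 1)) (Icc T v) :=
      continuousOn_const.mul ((hHcont.mono hsubIco).rpow_const (fun x _ => Or.inr (by linarith)))
    have hfd : ∀ x ∈ Ioo T v, HasDerivAt (fun u => (Hd H u) ^ 2) (2 * Hd H x * Hdd H x) x := by
      intro x hx
      have h0 := (hF4 x (hsubIoo hx)).pow 2
      norm_num at h0
      exact h0
    have hgd : ∀ x ∈ Ioo T v, HasDerivAt (fun u => 2 * (v + 1) ^ (-α) / (p + 1) * H u ^ (p + 1))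
        (2 * (v + 1) ^ (-α) / (p + 1) * (Hd H x * (p + 1) * H x ^ p)) x := by
      intro x hx
      have h1 := ((hF2 x (hsubIoo hx)).rpow_const
        (Or.inr (by linarith : (1 : ℝ) ≤ p + 1))).const_mul (2 * (v + 1) ^ (-α) / (p + 1))
      rw [show p + 1 - 1 = p by ring] at h1
      exact h1
    have hle : ∀ x ∈ Ioo T v, 2 * (v + 1) ^ (-α) / (p + 1) * (Hd H x * (p + 1) * H x ^ p) ≤
        2 * Hd H x * Hdd H x := by
      intro x hx
      have hx4 : x ∈ Icc (0 : ℝ) (4 * T) :=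
        ⟨by linarith [hx.1], by nlinarith [hx.2, hv.2]⟩
      have hdnn := hHdnn x hx4
      have hpnn : 0 ≤ H x ^ p := Real.rpow_nonneg (hHnn x hx4) p
      have hw2 : (v + 1) ^ (-α) ≤ (x + 1) ^ (-α) :=
        Real.rpow_le_rpow_of_nonpos (by linarith [hx.1])
          (by linarith [hx.2]) (by linarith)
      have hode := hODE' x hx.1.le (by nlinarith [hx.2, hv.2])
      have h1 : (v + 1) ^ (-α) * H x ^ p ≤ Hdd H x :=
        le_trans (mul_le_mul_of_nonneg_right hw2 hpnn) hode
      have he : 2 * (v + 1) ^ (-α) / (p + 1) * (Hd H x * (p + 1) * H x ^ p) =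
          2 * Hd H x * ((v + 1) ^ (-α) * H x ^ p) := by
        field_simp
      rw [he]
      exact mul_le_mul_of_nonneg_left h1 (by positivity)
    have h := mono_aux hTv hcf hcg hfd hgd hle
    have he2 : 2 * (v + 1) ^ (-α) / (p + 1) * (H v ^ (p + 1) - H T ^ (p + 1)) =
        2 * (v + 1) ^ (-α) / (p + 1) * H v ^ (p + 1) -
          2 * (v + 1) ^ (-α) / (p + 1) * H T ^ (p + 1) := by ring
    rw [he2]
    exact h
  -- step P4 : lower bound for the increment of H^(p+1) on [T, 2T]
  set L := (p + 1) * (LB ^ p * (A * T)) with hLdef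
  have hLpos : 0 < L := by
    have := hLBpos
    positivity
  have hsub24' : Icc T (4 * T) ⊆ Ico 0 b' := fun y hy =>
    ⟨le_trans hT0.le hy.1, by nlinarith [hy.2]⟩
  have hgen_cont : ∀ a b : ℝ, T ≤ a → b ≤ 4 * T →
      ContinuousOn (fun u => H u ^ (p + 1)) (Icc a b) := by
    intro a b ha hb
    have hs : Icc a b ⊆ Ico 0 b' := fun y hy =>
      ⟨by linarith [hy.1, hT0], by nlinarith [hy.2]⟩
    exact (hHcont.mono hs).rpow_const (fun x _ => Or.inr (by linarith))
  have hgen_deriv : ∀ x : ℝ, T < x → x < 4 * T →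
      HasDerivAt (fun u => H u ^ (p + 1)) (Hd H x * (p + 1) * H x ^ p) x := by
    intro x h1 h2
    have hx' : x ∈ Ioo 0 b' := ⟨by linarith, by linarith⟩
    have h3 := (hF2 x hx').rpow_const (Or.inr (by linarith : (1 : ℝ) ≤ p + 1))
    rw [show p + 1 - 1 = p by ring] at h3
    exact h3
  have P4 : L * T ≤ H (2 * T) ^ (p + 1) - H T ^ (p + 1) := by
    have hle : ∀ x ∈ Ioo T (2 * T), L ≤ Hd H x * (p + 1) * H x ^ p := by
      intro x hx
      have hx4 : x ∈ Icc T (4 * T) := ⟨hx.1.le, by linarith [hx.2]⟩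
      have h1 : LB ^ p ≤ H x ^ p := Real.rpow_le_rpow hLBpos.le (hHge x hx4) hp0.le
      have h2 : A * T ≤ Hd H x := hHdge x hx4
      have h3 : LB ^ p * (A * T) ≤ H x ^ p * Hd H x :=
        mul_le_mul h1 h2 (by positivity) (Real.rpow_nonneg (hHnn x ⟨by linarith [hx.1], by linarith [hx.2]⟩) p)
      have h4 : (p + 1) * (LB ^ p * (A * T)) ≤ (p + 1) * (H x ^ p * Hd H x) :=
        mul_le_mul_of_nonneg_left h3 hp1.le
      rw [hLdef]
      nlinarith [h4]
    have h := mono_aux (f := fun u => H u ^ (p + 1)) (g := fun u => L * u)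
      (g' := fun _ => L) (by linarith : T ≤ 2 * T)
      (hgen_cont T (2 * T) le_rfl (by linarith))
      ((continuous_const.mul continuous_id).continuousOn)
      (fun x hx => hgen_deriv x hx.1 (by linarith [hx.2]))
      (fun x _ => by simpa using (hasDerivAt_id x).const_mul L)
      hle
    have h' : L * (2 * T) - L * T ≤ H (2 * T) ^ (p + 1) - H T ^ (p + 1) := h
    nlinarith [h']
  have hKpos : 0 < L * T := by positivity
  -- step P4' : monotonicity, K ≤ H v^(p+1) - H T^(p+1) on [2T, 4T]
  have P4' : ∀ v ∈ Icc (2 * T) (4 * T), L * T ≤ H v ^ (p + 1) - H T ^ (p + 1) := by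
    intro v hv
    have h := mono_aux (f := fun u => H u ^ (p + 1)) (g := fun _ => (0 : ℝ))
      (g' := fun _ => (0 : ℝ)) (hv.1 : 2 * T ≤ v)
      (hgen_cont (2 * T) v (by linarith) hv.2)
      continuousOn_const
      (fun x hx => hgen_deriv x (by linarith [hx.1]) (by nlinarith [hx.2, hv.2]))
      (fun x _ => hasDerivAt_const x 0)
      (fun x hx => by
        have hx4 : x ∈ Icc T (4 * T) := ⟨by linarith [hx.1], by nlinarith [hx.2, hv.2]⟩
        have h1 : 0 ≤ H x ^ p := Real.rpow_nonneg (hHnn x ⟨by linarith [hx.1], by nlinarith [hx.2, hv.2]⟩) p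
        have h2 : 0 ≤ Hd H x := by linarith [hHdge x hx4, mul_pos hA hT0]
        positivity)
    have h' : (0 : ℝ) - 0 ≤ H v ^ (p + 1) - H (2 * T) ^ (p + 1) := h
    linarith [P4]
  -- the Osgood exponent
  set γ := gammaC p with hγdef
  have hγ1 : γ - 1 = (p - 1) / (2 * (p + 1)) := by
    rw [hγdef]; unfold gammaC; field_simp; ring
  have hγpos : 0 < γ - 1 := by rw [hγ1]; exact div_pos (by linarith) (by linarith)
  set c₀ := (p + 1) * (2 / (p + 1)) ^ ((1 : ℝ) / 2) * (4 * T + 1) ^ (-(α / 2)) with hc₀def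
  have hc₀pos : 0 < c₀ := by
    have h1 : (0 : ℝ) < (2 / (p + 1)) ^ ((1 : ℝ) / 2) := Real.rpow_pos_of_pos (by positivity) _
    have h2 : (0 : ℝ) < (4 * T + 1) ^ (-(α / 2)) := Real.rpow_pos_of_pos (by linarith) _
    rw [hc₀def]; positivity
  have hTmem : T ∈ Icc (0 : ℝ) (4 * T) := ⟨hT0.le, by linarith⟩
  -- step P5b : differential inequality for G = H^(p+1) - H T^(p+1)
  have P5b : ∀ v ∈ Ioo (2 * T) (4 * T),
      c₀ * (H v ^ (p + 1) - H T ^ (p + 1)) ^ γ ≤ Hd H v * (p + 1) * H v ^ p := by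
    intro v hv
    have hvI : v ∈ Icc (2 * T) (4 * T) := Ioo_subset_Icc_self hv
    have hv4 : v ∈ Icc (0 : ℝ) (4 * T) := ⟨by nlinarith [hv.1], hv.2.le⟩
    set X := H v ^ (p + 1) - H T ^ (p + 1) with hXdef
    have hGv : L * T ≤ X := P4' v hvI
    have hXpos : 0 < X := lt_of_lt_of_le hKpos hGv
    have hHdv : 0 ≤ Hd H v := hHdnn v hv4
    have hP3 := P3 v hvI
    have hwpos : (0 : ℝ) < (v + 1) ^ (-α) := Real.rpow_pos_of_pos (by nlinarith [hv.1]) _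
    have hsq : 2 / (p + 1) * ((v + 1) ^ (-α) * X) ≤ (Hd H v) ^ 2 := by
      have he : 2 / (p + 1) * ((v + 1) ^ (-α) * X) = 2 * (v + 1) ^ (-α) / (p + 1) * X := by
        ring
      rw [he, hXdef]
      nlinarith [hP3, sq_nonneg (Hd H T)]
    have hY : 0 ≤ 2 / (p + 1) * ((v + 1) ^ (-α) * X) := by positivity
    have hstep1 : (2 / (p + 1) * ((v + 1) ^ (-α) * X)) ^ ((1 : ℝ) / 2) ≤ Hd H v := by
      have h2 : ((Hd H v) ^ 2 : ℝ) ^ ((1 : ℝ) / 2) = Hd H v := by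
        rw [← Real.rpow_natCast (Hd H v) 2, ← Real.rpow_mul hHdv]
        norm_num
      calc (2 / (p + 1) * ((v + 1) ^ (-α) * X)) ^ ((1 : ℝ) / 2)
          ≤ ((Hd H v) ^ 2) ^ ((1 : ℝ) / 2) := Real.rpow_le_rpow hY hsq (by norm_num)
        _ = Hd H v := h2
    have hsplit : (2 / (p + 1) * ((v + 1) ^ (-α) * X)) ^ ((1 : ℝ) / 2) =
        (2 / (p + 1)) ^ ((1 : ℝ) / 2) * ((v + 1) ^ (-(α / 2)) * X ^ ((1 : ℝ) / 2)) := by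
      rw [Real.mul_rpow (by positivity) (by positivity),
        Real.mul_rpow hwpos.le hXpos.le, ← Real.rpow_mul (by nlinarith [hv.1] : (0:ℝ) ≤ v + 1),
        show -α * (1 / 2) = -(α / 2) by ring]
    have hstep1' : (2 / (p + 1)) ^ ((1 : ℝ) / 2) * ((v + 1) ^ (-(α / 2)) * X ^ ((1 : ℝ) / 2)) ≤
        Hd H v := by rw [← hsplit]; exact hstep1
    have hstep3 : X ^ (p / (p + 1)) ≤ H v ^ p := by
      have hXle : X ≤ H v ^ (p + 1) := by
        rw [hXdef]
        nlinarith [Real.rpow_nonneg (hHnn T hTmem) (p + 1)]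
      calc X ^ (p / (p + 1)) ≤ (H v ^ (p + 1)) ^ (p / (p + 1)) :=
            Real.rpow_le_rpow hXpos.le hXle (by positivity)
        _ = H v ^ ((p + 1) * (p / (p + 1))) := (Real.rpow_mul (hHnn v hv4) _ _).symm
        _ = H v ^ p := by rw [show (p + 1) * (p / (p + 1)) = p by field_simp]
    have hw4 : (4 * T + 1) ^ (-(α / 2)) ≤ (v + 1) ^ (-(α / 2)) :=
      Real.rpow_le_rpow_of_nonpos (by nlinarith [hv.1]) (by linarith [hv.2])
        (by linarith)
    have hXγ : X ^ γ = X ^ (p / (p + 1)) * X ^ ((1 : ℝ) / 2) := by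
      rw [hγdef]
      unfold gammaC
      rw [Real.rpow_add hXpos]
    have hXhalf : (0:ℝ) ≤ X ^ ((1 : ℝ) / 2) := Real.rpow_nonneg hXpos.le _
    have hXp : (0:ℝ) ≤ X ^ (p / (p + 1)) := Real.rpow_nonneg hXpos.le _
    have h2half : (0:ℝ) ≤ (2 / (p + 1)) ^ ((1 : ℝ) / 2) := Real.rpow_nonneg (by positivity) _
    calc c₀ * X ^ γ
        = (2 / (p + 1)) ^ ((1 : ℝ) / 2) * ((4 * T + 1) ^ (-(α / 2)) * X ^ ((1 : ℝ) / 2)) *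
            ((p + 1) * X ^ (p / (p + 1))) := by rw [hXγ, hc₀def]; ring
      _ ≤ (2 / (p + 1)) ^ ((1 : ℝ) / 2) * ((v + 1) ^ (-(α / 2)) * X ^ ((1 : ℝ) / 2)) *
            ((p + 1) * X ^ (p / (p + 1))) := by
          have hmul : (4 * T + 1) ^ (-(α / 2)) * X ^ ((1 : ℝ) / 2) ≤
              (v + 1) ^ (-(α / 2)) * X ^ ((1 : ℝ) / 2) :=
            mul_le_mul_of_nonneg_right hw4 hXhalf
          have := mul_le_mul_of_nonneg_left hmul h2half
          exact mul_le_mul_of_nonneg_right this (by positivity)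
      _ ≤ Hd H v * ((p + 1) * X ^ (p / (p + 1))) := by
          exact mul_le_mul_of_nonneg_right hstep1' (by positivity)
      _ = Hd H v * (p + 1) * X ^ (p / (p + 1)) := by ring
      _ ≤ Hd H v * (p + 1) * H v ^ p := by
          exact mul_le_mul_of_nonneg_left hstep3 (by positivity)
  -- step P5c : Osgood integration on [2T, 4T]
  have hGpos' : ∀ v ∈ Icc (2 * T) (4 * T), 0 < H v ^ (p + 1) - H T ^ (p + 1) := fun v hv =>
    lt_of_lt_of_le hKpos (P4' v hv)
  have star : (γ - 1) * c₀ * (2 * T) ≤ (L * T) ^ (-(γ - 1)) := by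
    have h2T4T : (2 * T : ℝ) ≤ 4 * T := by linarith
    have hcontG : ContinuousOn (fun v => H v ^ (p + 1) - H T ^ (p + 1)) (Icc (2 * T) (4 * T)) :=
      (hgen_cont (2 * T) (4 * T) (by linarith) le_rfl).sub continuousOn_const
    have hf : ContinuousOn (fun v => -((H v ^ (p + 1) - H T ^ (p + 1)) ^ (-(γ - 1))))
        (Icc (2 * T) (4 * T)) :=
      (hcontG.rpow_const (fun x hx => Or.inl (ne_of_gt (hGpos' x hx)))).neg
    have hfd : ∀ x ∈ Ioo (2 * T) (4 * T),
        HasDerivAt (fun v => -((H v ^ (p + 1) - H T ^ (p + 1)) ^ (-(γ - 1))))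
          (-(Hd H x * (p + 1) * H x ^ p * -(γ - 1) *
            (H x ^ (p + 1) - H T ^ (p + 1)) ^ (-(γ - 1) - 1))) x := by
      intro x hx
      have hGx : HasDerivAt (fun v => H v ^ (p + 1) - H T ^ (p + 1))
          (Hd H x * (p + 1) * H x ^ p) x :=
        ((hgen_deriv x (by linarith [hx.1]) (by linarith [hx.2])).sub_const (H T ^ (p + 1)))
      exact (hGx.rpow_const (Or.inl (ne_of_gt (hGpos' x (Ioo_subset_Icc_self hx))))).neg
    have hle : ∀ x ∈ Ioo (2 * T) (4 * T), (γ - 1) * c₀ ≤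
        -(Hd H x * (p + 1) * H x ^ p * -(γ - 1) *
          (H x ^ (p + 1) - H T ^ (p + 1)) ^ (-(γ - 1) - 1)) := by
      intro x hx
      have hXpos := hGpos' x (Ioo_subset_Icc_self hx)
      have hb := P5b x hx
      have hZnn : 0 ≤ (H x ^ (p + 1) - H T ^ (p + 1)) ^ (-(γ - 1) - 1) :=
        Real.rpow_nonneg hXpos.le _
      have hXe : (H x ^ (p + 1) - H T ^ (p + 1)) ^ γ *
          (H x ^ (p + 1) - H T ^ (p + 1)) ^ (-(γ - 1) - 1) = 1 := by
        rw [← Real.rpow_add hXpos, show γ + (-(γ - 1) - 1) = 0 by ring, Real.rpow_zero]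
      have h1 : c₀ * ((H x ^ (p + 1) - H T ^ (p + 1)) ^ γ *
          (H x ^ (p + 1) - H T ^ (p + 1)) ^ (-(γ - 1) - 1)) ≤
          Hd H x * (p + 1) * H x ^ p * (H x ^ (p + 1) - H T ^ (p + 1)) ^ (-(γ - 1) - 1) := by
        have h2 := mul_le_mul_of_nonneg_right hb hZnn
        nlinarith [h2]
      rw [hXe, mul_one] at h1
      nlinarith [mul_le_mul_of_nonneg_left h1 hγpos.le]
    have h := mono_aux (g := fun v => (γ - 1) * c₀ * v) h2T4T hf
      ((continuous_const.mul continuous_id).continuousOn :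
        ContinuousOn (fun v => (γ - 1) * c₀ * v) (Icc (2 * T) (4 * T)))
      hfd (fun x _ => by simpa using (hasDerivAt_id x).const_mul ((γ - 1) * c₀)) hle
    have h' : (γ - 1) * c₀ * (4 * T) - (γ - 1) * c₀ * (2 * T) ≤
        -((H (4 * T) ^ (p + 1) - H T ^ (p + 1)) ^ (-(γ - 1))) -
        -((H (2 * T) ^ (p + 1) - H T ^ (p + 1)) ^ (-(γ - 1))) := h
    have hG2 : L * T ≤ H (2 * T) ^ (p + 1) - H T ^ (p + 1) :=
      P4' (2 * T) ⟨le_rfl, h2T4T⟩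
    have hup : (H (2 * T) ^ (p + 1) - H T ^ (p + 1)) ^ (-(γ - 1)) ≤ (L * T) ^ (-(γ - 1)) :=
      Real.rpow_le_rpow_of_nonpos hKpos hG2 (by linarith)
    have hnn4 : 0 ≤ (H (4 * T) ^ (p + 1) - H T ^ (p + 1)) ^ (-(γ - 1)) :=
      Real.rpow_nonneg (hGpos' (4 * T) ⟨h2T4T, le_rfl⟩).le _
    have he : (γ - 1) * c₀ * (4 * T) - (γ - 1) * c₀ * (2 * T) = (γ - 1) * c₀ * (2 * T) := by
      ring
    linarith [h']
  -- final algebra: extract the bound on T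
  have hKeq : L * T = ((p + 1) * (1 / 2 : ℝ) ^ p) * (A ^ (p + 1) * T ^ (2 * p + 2)) := by
    have h1 : LB = (A * (1 / 2)) * (T * T) := by rw [hLBdef]; ring
    have h2 : LB ^ p = A ^ p * (1 / 2 : ℝ) ^ p * (T * T) ^ p := by
      rw [h1, Real.mul_rpow (by positivity) (by positivity),
        Real.mul_rpow hA.le (by norm_num)]
    have h3 : (T * T) ^ p = T ^ (2 * p) := by
      rw [show T * T = T ^ (2:ℝ) by
          rw [show (2:ℝ) = ((2:ℕ):ℝ) by norm_num, Real.rpow_natCast]; ring,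
        ← Real.rpow_mul hT0.le]
    have h4 : A ^ p * A = A ^ (p + 1) := by
      rw [Real.rpow_add hA, Real.rpow_one]
    have h5 : T ^ (2 * p) * T * T = T ^ (2 * p + 2) := by
      rw [show (2 * p + 2 : ℝ) = 2 * p + 1 + 1 by ring, Real.rpow_add hT0,
        Real.rpow_add hT0, Real.rpow_one]
    calc L * T = (p + 1) * ((A ^ p * (1 / 2 : ℝ) ^ p * T ^ (2 * p)) * (A * T)) * T := by
          rw [hLdef, h2, h3]
      _ = ((p + 1) * (1 / 2 : ℝ) ^ p) * ((A ^ p * A) * (T ^ (2 * p) * T * T)) := by ring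
      _ = ((p + 1) * (1 / 2 : ℝ) ^ p) * (A ^ (p + 1) * T ^ (2 * p + 2)) := by rw [h4, h5]
  have hKpow : (L * T) ^ (-(γ - 1)) =
      ((p + 1) * (1 / 2 : ℝ) ^ p) ^ (-(γ - 1)) * (A ^ (-((p - 1) / 2)) * T ^ (-(p - 1))) := by
    rw [hKeq, Real.mul_rpow (by positivity) (by positivity),
      Real.mul_rpow (Real.rpow_nonneg hA.le _) (Real.rpow_nonneg hT0.le _),
      ← Real.rpow_mul hA.le, ← Real.rpow_mul hT0.le,
      show (p + 1) * -(γ - 1) = -((p - 1) / 2) by rw [hγ1]; field_simp,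
      show (2 * p + 2) * -(γ - 1) = -(p - 1) by rw [hγ1]; field_simp]
  have hw5 : (5 : ℝ) ^ (-(α / 2)) * T ^ (-(α / 2)) ≤ (4 * T + 1) ^ (-(α / 2)) := by
    rw [← Real.mul_rpow (by norm_num) hT0.le]
    exact Real.rpow_le_rpow_of_nonpos (by linarith) (by linarith) (by linarith)
  set κ := ((p + 1) * (1 / 2 : ℝ) ^ p) ^ (-(γ - 1)) with hκdef
  have hκpos : 0 < κ := Real.rpow_pos_of_pos (by positivity) _
  set D := 2 * (γ - 1) * (p + 1) * (2 / (p + 1)) ^ ((1 : ℝ) / 2) * (5 : ℝ) ^ (-(α / 2))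
    with hDdef
  have hDpos : 0 < D := by
    rw [hDdef]
    have h1 : (0 : ℝ) < (2 / (p + 1)) ^ ((1 : ℝ) / 2) := Real.rpow_pos_of_pos (by positivity) _
    have h2 : (0 : ℝ) < (5 : ℝ) ^ (-(α / 2)) := Real.rpow_pos_of_pos (by norm_num) _
    have h3 : (0 : ℝ) < 2 * (γ - 1) := by linarith
    positivity
  -- dagger : D * (T * T^(-(α/2))) ≤ κ * (A^(-((p-1)/2)) * T^(-(p-1)))
  have hdag : D * (T * T ^ (-(α / 2))) ≤ κ * (A ^ (-((p - 1) / 2)) * T ^ (-(p - 1))) := by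
    have hE : 0 ≤ (γ - 1) * (p + 1) * (2 / (p + 1)) ^ ((1 : ℝ) / 2) * (2 * T) := by
      have h1 : (0 : ℝ) ≤ (2 / (p + 1)) ^ ((1 : ℝ) / 2) := Real.rpow_nonneg (by positivity) _
      have h3 : (0 : ℝ) ≤ γ - 1 := hγpos.le
      positivity
    have h1 : (γ - 1) * (p + 1) * (2 / (p + 1)) ^ ((1 : ℝ) / 2) * (2 * T) *
        ((5 : ℝ) ^ (-(α / 2)) * T ^ (-(α / 2))) ≤
        (γ - 1) * (p + 1) * (2 / (p + 1)) ^ ((1 : ℝ) / 2) * (2 * T) *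
        ((4 * T + 1) ^ (-(α / 2))) := mul_le_mul_of_nonneg_left hw5 hE
    have h2 : (γ - 1) * (p + 1) * (2 / (p + 1)) ^ ((1 : ℝ) / 2) * (2 * T) *
        ((4 * T + 1) ^ (-(α / 2))) = (γ - 1) * c₀ * (2 * T) := by rw [hc₀def]; ring
    have h3 : D * (T * T ^ (-(α / 2))) = (γ - 1) * (p + 1) * (2 / (p + 1)) ^ ((1 : ℝ) / 2) *
        (2 * T) * ((5 : ℝ) ^ (-(α / 2)) * T ^ (-(α / 2))) := by rw [hDdef]; ring
    rw [h3, ← hKpow]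
    calc _ ≤ (γ - 1) * c₀ * (2 * T) := by rw [← h2]; exact h1
      _ ≤ (L * T) ^ (-(γ - 1)) := star
  -- multiply through by A^((p-1)/2) * T^(p-1)
  have hApos2 : (0 : ℝ) < A ^ ((p - 1) / 2) := Real.rpow_pos_of_pos hA _
  have hA0 : A ^ (-((p - 1) / 2)) * A ^ ((p - 1) / 2) = 1 := by
    rw [← Real.rpow_add hA]; norm_num
  have hT0' : T ^ (-(p - 1)) * T ^ (p - 1) = 1 := by
    rw [← Real.rpow_add hT0]; norm_num
  set δ := p - α / 2 with hδdef
  have hδeq : δ = (2 - ((n : ℝ) - 1) * (p - 1)) / 4 := by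
    rw [hδdef, hαdef]; unfold alphaC; ring
  have hden : (0 : ℝ) < 2 - ((n : ℝ) - 1) * (p - 1) := by nlinarith
  have hδpos : 0 < δ := by rw [hδeq]; linarith
  have hTsplit : T ^ δ = T * T ^ (-(α / 2)) * T ^ (p - 1) := by
    rw [hδdef, show p - α / 2 = 1 + -(α / 2) + (p - 1) by ring, Real.rpow_add hT0,
      Real.rpow_add hT0, Real.rpow_one]
  have star2 : D * (A ^ ((p - 1) / 2) * T ^ δ) ≤ κ := by
    have hmul := mul_le_mul_of_nonneg_right hdag
      (show 0 ≤ A ^ ((p - 1) / 2) * T ^ (p - 1) by positivity)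
    calc D * (A ^ ((p - 1) / 2) * T ^ δ)
        = D * (T * T ^ (-(α / 2))) * (A ^ ((p - 1) / 2) * T ^ (p - 1)) := by
          rw [hTsplit]; ring
      _ ≤ κ * (A ^ (-((p - 1) / 2)) * T ^ (-(p - 1))) *
          (A ^ ((p - 1) / 2) * T ^ (p - 1)) := hmul
      _ = κ * ((A ^ (-((p - 1) / 2)) * A ^ ((p - 1) / 2)) *
          (T ^ (-(p - 1)) * T ^ (p - 1))) := by ring
      _ = κ := by rw [hA0, hT0']; ring
  have hstar3 : A ^ ((p - 1) / 2) * T ^ δ ≤ κ / D := by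
    rw [le_div_iff₀ hDpos]
    calc A ^ ((p - 1) / 2) * T ^ δ * D = D * (A ^ ((p - 1) / 2) * T ^ δ) := by ring
      _ ≤ κ := star2
  have hTfin : T ^ δ ≤ κ / D * A ^ (-((p - 1) / 2)) := by
    calc T ^ δ = A ^ (-((p - 1) / 2)) * A ^ ((p - 1) / 2) * T ^ δ := by rw [hA0]; ring
      _ = A ^ (-((p - 1) / 2)) * (A ^ ((p - 1) / 2) * T ^ δ) := by ring
      _ ≤ A ^ (-((p - 1) / 2)) * (κ / D) :=
          mul_le_mul_of_nonneg_left hstar3 (Real.rpow_nonneg hA.le _)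
      _ = κ / D * A ^ (-((p - 1) / 2)) := by ring
  have hCCeq : (κ / D) ^ δ⁻¹ = CC n p := by
    rw [hκdef, hDdef, hδdef, hαdef, hγdef]
    unfold CC
    rfl
  have hexp : -((p - 1) / 2) * δ⁻¹ = -(2 * (p - 1) / (2 - ((n : ℝ) - 1) * (p - 1))) := by
    rw [hδeq]
    field_simp
    ring
  calc T = (T ^ δ) ^ δ⁻¹ := by
        rw [← Real.rpow_mul hT0.le, mul_inv_cancel₀ hδpos.ne', Real.rpow_one]
    _ ≤ (κ / D * A ^ (-((p - 1) / 2))) ^ δ⁻¹ :=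
        Real.rpow_le_rpow (Real.rpow_nonneg hT0.le δ) hTfin (by positivity)
    _ = (κ / D) ^ δ⁻¹ * (A ^ (-((p - 1) / 2))) ^ δ⁻¹ :=
        Real.mul_rpow (by positivity) (Real.rpow_nonneg hA.le _)
    _ = (κ / D) ^ δ⁻¹ * A ^ (-((p - 1) / 2) * δ⁻¹) := by rw [← Real.rpow_mul hA.le]
    _ = CC n p * A ^ (-(2 * (p - 1) / (2 - ((n : ℝ) - 1) * (p - 1)))) := by
        rw [hCCeq, hexp]

lemma CC_pos (n : ℕ) {p : ℝ} (hp : 1 < p) : 0 < CC n p := by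
  have hp1 : (0 : ℝ) < p + 1 := by linarith
  have hγ : 0 < gammaC p - 1 := by
    have h : gammaC p - 1 = (p - 1) / (2 * (p + 1)) := by
      unfold gammaC; field_simp; ring
    rw [h]; exact div_pos (by linarith) (by linarith)
  unfold CC
  apply Real.rpow_pos_of_pos
  apply div_pos (Real.rpow_pos_of_pos (by positivity) _)
  have h1 : (0 : ℝ) < (2 / (p + 1)) ^ ((1 : ℝ) / 2) := Real.rpow_pos_of_pos (by positivity) _
  have h2 : (0 : ℝ) < (5 : ℝ) ^ (-(alphaC n p / 2)) := Real.rpow_pos_of_pos (by norm_num) _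
  have h3 : (0 : ℝ) < 2 * (gammaC p - 1) := by linarith
  positivity

lemma bound_lemma (n : ℕ) (p T₀ : ℝ) (hp : 1 < p)
    (hpc : p * ((n : ℝ) - 1) < (n : ℝ) + 1) (A : ℝ) (hA : 0 < A)
    (H : ℝ → ℝ) (S : EReal) (hm : MemAsub n p T₀ A H S) :
    S ≤ ((4 * max (max T₀ 1)
      (CC n p * A ^ (-(2 * (p - 1) / (2 - ((n : ℝ) - 1) * (p - 1)))) + 1) : ℝ) : EReal) := by
  set X := CC n p * A ^ (-(2 * (p - 1) / (2 - ((n : ℝ) - 1) * (p - 1)))) with hXdef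
  by_contra hcon
  push_neg at hcon
  obtain ⟨c, hc1, hc2⟩ := exists_between hcon
  have hcT : c ≠ ⊤ := ne_top_of_lt hc2
  have hcB : c ≠ ⊥ := by
    intro h'; rw [h'] at hc1; exact (EReal.bot_lt_coe _).not_gt hc1
  have hcoe : ((c.toReal : ℝ) : EReal) = c := EReal.coe_toReal hcT hcB
  set r := c.toReal with hrdef
  have hMr : 4 * max (max T₀ 1) (X + 1) < r := by
    rw [← EReal.coe_lt_coe_iff, hcoe]; exact hc1
  have hrS : ((r : ℝ) : EReal) < S := by rw [hcoe]; exact hc2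
  have hmax1 : (1 : ℝ) ≤ max (max T₀ 1) (X + 1) :=
    le_trans (le_max_right T₀ 1) (le_max_left _ _)
  have hmaxT0 : T₀ ≤ max (max T₀ 1) (X + 1) :=
    le_trans (le_max_left T₀ 1) (le_max_left _ _)
  have hmaxX : X + 1 ≤ max (max T₀ 1) (X + 1) := le_max_right _ _
  have hT1 : 1 ≤ r / 4 := by linarith
  have hTT0 : T₀ ≤ r / 4 := by linarith
  have hTS : ((4 * (r / 4) : ℝ) : EReal) < S := by
    rw [show (4 * (r / 4) : ℝ) = r by ring]; exact hrS
  have hkey := key n p T₀ A hp hpc hA H S hm (r / 4) hT1 hTT0 hTS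
  rw [← hXdef] at hkey
  linarith

/-- Subcritical ODE lemma: `T_sub(A) = sup {𝒯_H : H ∈ 𝒜_sub(A)}` is finite for every `A > 0`,
and `limsup_{A → 0⁺} T_sub(A) · A^{2(p-1)/(2-(n-1)(p-1))} < ∞`: there are `A₀ > 0`, `C > 0`
with `𝒯_H ≤ C A^{-2(p-1)/(2-(n-1)(p-1))}` for all `A ∈ (0, A₀)`, `H ∈ 𝒜_sub(A)`.
(Here `1 < p` and `p (n-1) < n + 1` encodes `p ∈ (1, p_c(n))`, with `p_c(1) = ∞`.) -/
theorem sub_ode_lemma (n : ℕ) (hn : 1 ≤ n) (p T₀ : ℝ) (hp : 1 < p)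
    (hpc : p * ((n : ℝ) - 1) < (n : ℝ) + 1) (hT₀ : 0 < T₀) :
    (∀ A : ℝ, 0 < A → ∃ M : ℝ, ∀ (H : ℝ → ℝ) (S : EReal),
      MemAsub n p T₀ A H S → S ≤ (M : EReal)) ∧
    (∃ A₀ > (0 : ℝ), ∃ C > (0 : ℝ), ∀ A : ℝ, 0 < A → A < A₀ →
      ∀ (H : ℝ → ℝ) (S : EReal), MemAsub n p T₀ A H S →
        S ≤ ((C * A ^ (-(2 * (p - 1) / (2 - ((n : ℝ) - 1) * (p - 1)))) : ℝ) : EReal)) := by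
  have hCC := CC_pos n hp
  have hmax0 : (0 : ℝ) < max T₀ 1 := lt_max_of_lt_right one_pos
  constructor
  · intro A hA
    exact ⟨4 * max (max T₀ 1)
      (CC n p * A ^ (-(2 * (p - 1) / (2 - ((n : ℝ) - 1) * (p - 1)))) + 1),
      fun H S hm => bound_lemma n p T₀ hp hpc A hA H S hm⟩
  · refine ⟨1, one_pos, 4 * (max T₀ 1 + CC n p + 1), by nlinarith, ?_⟩
    intro A hA hA1 H S hm
    refine le_trans (bound_lemma n p T₀ hp hpc A hA H S hm) (EReal.coe_le_coe_iff.2 ?_)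
    set X := A ^ (-(2 * (p - 1) / (2 - ((n : ℝ) - 1) * (p - 1)))) with hXdef
    have hden : (0 : ℝ) < 2 - ((n : ℝ) - 1) * (p - 1) := by nlinarith
    have hθ : 0 ≤ 2 * (p - 1) / (2 - ((n : ℝ) - 1) * (p - 1)) :=
      div_nonneg (by linarith) hden.le
    have hX1 : 1 ≤ X := by
      rw [hXdef]
      exact Real.one_le_rpow_of_pos_of_le_one_of_nonpos hA hA1.le (by linarith)
    have hXpos : 0 < X := by linarith
    have h2 : max (max T₀ 1) (CC n p * X + 1) ≤ max T₀ 1 + (CC n p * X + 1) :=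
      max_le_add_of_nonneg hmax0.le (by positivity)
    have h3 : max T₀ 1 ≤ max T₀ 1 * X := le_mul_of_one_le_right hmax0.le hX1
    have h4 : CC n p ≤ CC n p * X := le_mul_of_one_le_right hCC.le hX1
    nlinarith [h2, h3, h4, hX1, hCC, hmax0]
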